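/- Let L be a nonempty finite set of positive integers, let a_i > 0 for each i \in L, and let \phi > 0. For vectors \nu = (\nu_i)_{i \in L} define s(\nu) = \sum_{i \in L} \nu_i and F(\nu) = \sum_{i \in L} \nu_i \log(a_i / \nu_i) + s(\nu) \log(s(\nu)/\phi), and let D = \{ \nu : \nu_i \ge 0 \text{ for all } i \in L, \sum_{i \in L} i \nu_i = 1 \}. Then F attains a maximum value M on D, and this maximum value satisfies \sum_{i \in L} a_i e^{-iM} = \phi. -/

import Mathlib

/-- Let `L` be a nonempty finite set of positive integers, `a_i > 0` for
`i ∈ L`, and `φ > 0`. For `ν = (ν_i)_{i ∈ L}` let `s(ν) = ∑_{i∈L} ν_i` and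
`F(ν) = ∑_{i∈L} ν_i log(a_i/ν_i) + s(ν) log(s(ν)/φ)`, and let
`D = {ν : ν_i ≥ 0 for all i ∈ L, ∑_{i∈L} i ν_i = 1}`. Then `F` attains a maximum
value `M` on `D`, and this maximum value satisfies `∑_{i∈L} a_i e^{-iM} = φ`.
(The convention `0 · log(a/0) = 0` holds automatically in Lean.) -/
theorem max_value_satisfies_polynomial_equation
    (L : Finset ℕ) (hL : L.Nonempty) (hLpos : ∀ i ∈ L, 0 < i)
    (a : ℕ → ℝ) (ha : ∀ i ∈ L, 0 < a i) (φ : ℝ) (hφ : 0 < φ) :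
    ∃ M : ℝ,
      IsGreatest
        ((fun ν : ℕ → ℝ =>
            (∑ i ∈ L, ν i * Real.log (a i / ν i)) +
            (∑ i ∈ L, ν i) * Real.log ((∑ i ∈ L, ν i) / φ)) ''
          {ν : ℕ → ℝ | (∀ i ∈ L, 0 ≤ ν i) ∧ (∑ i ∈ L, (i : ℝ) * ν i) = 1}) M ∧
      (∑ i ∈ L, a i * Real.exp (-(i : ℝ) * M)) = φ := by
  classical
  obtain ⟨j, hj⟩ := hL
  set Q : ℝ → ℝ := fun x => ∑ i ∈ L, a i * Real.exp (-(i : ℝ) * x) with hQdef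
  have hQcont : Continuous Q := by
    apply continuous_finset_sum
    intro i _
    exact continuous_const.mul ((continuous_const.mul continuous_id).rexp)
  have hA : 0 < ∑ i ∈ L, a i := Finset.sum_pos (fun i hi => ha i hi) ⟨j, hj⟩
  set A := ∑ i ∈ L, a i with hAdef
  set x₁ := max 0 (Real.log (A / φ)) with hx1def
  set x₀ := min x₁ (Real.log (a j / φ) / (j : ℝ)) with hx0def
  have hx01 : x₀ ≤ x₁ := min_le_left _ _
  have hQ1 : Q x₁ ≤ φ := by
    have hstep : ∀ i ∈ L, a i * Real.exp (-(i : ℝ) * x₁) ≤ a i * Real.exp (-x₁) := by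
      intro i hi
      have h1 : (1 : ℝ) ≤ (i : ℝ) := by exact_mod_cast hLpos i hi
      have hx1 : (0 : ℝ) ≤ x₁ := le_max_left _ _
      have : -(i : ℝ) * x₁ ≤ -x₁ := by nlinarith
      exact mul_le_mul_of_nonneg_left (Real.exp_le_exp.mpr this) (ha i hi).le
    have hexp : Real.exp (-x₁) ≤ φ / A := by
      have : Real.log (A / φ) ≤ x₁ := le_max_right _ _
      have h2 : -x₁ ≤ Real.log (φ / A) := by
        rw [Real.log_div hφ.ne' hA.ne']
        rw [Real.log_div hA.ne' hφ.ne'] at this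
        linarith
      calc Real.exp (-x₁) ≤ Real.exp (Real.log (φ / A)) := Real.exp_le_exp.mpr h2
        _ = φ / A := Real.exp_log (div_pos hφ hA)
    calc Q x₁ ≤ ∑ i ∈ L, a i * Real.exp (-x₁) := Finset.sum_le_sum hstep
      _ = A * Real.exp (-x₁) := by rw [← Finset.sum_mul]
      _ ≤ A * (φ / A) := mul_le_mul_of_nonneg_left hexp hA.le
      _ = φ := by field_simp
  have hQ0 : φ ≤ Q x₀ := by
    have hjpos : (0 : ℝ) < (j : ℝ) := by exact_mod_cast hLpos j hj
    have hx0 : x₀ ≤ Real.log (a j / φ) / (j : ℝ) := min_le_right _ _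
    have h2 : Real.log (φ / a j) ≤ -(j : ℝ) * x₀ := by
      have h3 : (j : ℝ) * x₀ ≤ Real.log (a j / φ) := by
        rw [← le_div_iff₀' hjpos] at *
        linarith [mul_le_mul_of_nonneg_left hx0 hjpos.le]
      rw [Real.log_div hφ.ne' (ha j hj).ne']
      rw [Real.log_div (ha j hj).ne' hφ.ne'] at h3
      linarith
    have hexp : φ / a j ≤ Real.exp (-(j : ℝ) * x₀) := by
      calc φ / a j = Real.exp (Real.log (φ / a j)) :=
            (Real.exp_log (div_pos hφ (ha j hj))).symm
        _ ≤ Real.exp (-(j : ℝ) * x₀) := Real.exp_le_exp.mpr h2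
    have hterm : φ ≤ a j * Real.exp (-(j : ℝ) * x₀) := by
      have := mul_le_mul_of_nonneg_left hexp (ha j hj).le
      calc φ = a j * (φ / a j) := by
            rw [mul_comm, div_mul_cancel₀ _ (ha j hj).ne']
        _ ≤ a j * Real.exp (-(j : ℝ) * x₀) := this
    refine hterm.trans ?_
    exact Finset.single_le_sum (f := fun i => a i * Real.exp (-(i : ℝ) * x₀))
      (fun i hi => (mul_pos (ha i hi) (Real.exp_pos _)).le) hj
  obtain ⟨M, -, hM⟩ : ∃ M ∈ Set.Icc x₀ x₁, Q M = φ := by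
    have := intermediate_value_Icc' hx01 hQcont.continuousOn (Set.mem_Icc.mpr ⟨hQ1, hQ0⟩)
    obtain ⟨M, hM1, hM2⟩ := this
    exact ⟨M, hM1, hM2⟩
  set b : ℕ → ℝ := fun i => a i * Real.exp (-(i : ℝ) * M) with hbdef
  have hbpos : ∀ i ∈ L, 0 < b i := fun i hi => mul_pos (ha i hi) (Real.exp_pos _)
  have hbsum : ∑ i ∈ L, b i = φ := hM
  refine ⟨M, ⟨?_, ?_⟩, hM⟩
  · -- membership : the maximum is attained
    set T : ℝ := ∑ i ∈ L, (i : ℝ) * b i with hTdef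
    have hT : 0 < T := Finset.sum_pos (fun i hi =>
      mul_pos (by exact_mod_cast hLpos i hi) (hbpos i hi)) ⟨j, hj⟩
    set ν : ℕ → ℝ := fun i => b i / T with hνdef
    refine ⟨ν, ⟨fun i hi => div_nonneg (hbpos i hi).le hT.le, ?_⟩, ?_⟩
    · have : ∑ i ∈ L, (i : ℝ) * ν i = (∑ i ∈ L, (i : ℝ) * b i) / T := by
        rw [Finset.sum_div]
        exact Finset.sum_congr rfl fun i hi => by rw [hνdef]; ring
      rw [this, ← hTdef, div_self hT.ne']
    · -- F ν = M
      have hs : ∑ i ∈ L, ν i = φ / T := by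
        rw [hνdef, ← Finset.sum_div, hbsum]
      have hlogterm : ∀ i ∈ L, ν i * Real.log (a i / ν i)
          = ν i * Real.log T + M * ((i : ℝ) * ν i) := by
        intro i hi
        have hνi : 0 < ν i := div_pos (hbpos i hi) hT
        have key : a i / ν i = T * Real.exp ((i : ℝ) * M) := by
          rw [show ν i = b i / T from rfl, div_div_eq_mul_div,
            show b i = a i * Real.exp (-(i : ℝ) * M) from rfl, neg_mul, Real.exp_neg]
          have hai : a i ≠ 0 := (ha i hi).ne'
          have he : Real.exp ((i:ℝ)*M) ≠ 0 := Real.exp_ne_zero _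
          field_simp
        rw [key, Real.log_mul hT.ne' (Real.exp_ne_zero _), Real.log_exp]
        ring
      have hconstr : ∑ i ∈ L, (i : ℝ) * ν i = 1 := by
        have : ∑ i ∈ L, (i : ℝ) * ν i = (∑ i ∈ L, (i : ℝ) * b i) / T := by
          rw [Finset.sum_div]
          exact Finset.sum_congr rfl fun i hi => by rw [hνdef]; ring
        rw [this, ← hTdef, div_self hT.ne']
      have hsum1 : ∑ i ∈ L, ν i * Real.log (a i / ν i)
          = (∑ i ∈ L, ν i) * Real.log T + M := by
        rw [Finset.sum_congr rfl hlogterm, Finset.sum_add_distrib, ← Finset.sum_mul,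
          ← Finset.mul_sum, hconstr, mul_one]
      have hlog2 : Real.log ((∑ i ∈ L, ν i) / φ) = -Real.log T := by
        rw [hs, div_div, mul_comm, ← div_div, div_self hφ.ne', one_div, Real.log_inv]
      simp only
      rw [hsum1, hlog2]
      ring
  · -- upper bound
    rintro y ⟨ν, ⟨hν0, hν1⟩, rfl⟩
    set s := ∑ i ∈ L, ν i with hsdef
    have hs0 : 0 < s := by
      rcases lt_or_eq_of_le (Finset.sum_nonneg fun i hi => hν0 i hi) with h | h
      · exact h
      · exfalso
        have hall : ∀ i ∈ L, ν i = 0 := by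
          intro i hi
          have := (Finset.sum_eq_zero_iff_of_nonneg fun i hi => hν0 i hi).mp h.symm
          exact this i hi
        have : ∑ i ∈ L, (i : ℝ) * ν i = 0 :=
          Finset.sum_eq_zero fun i hi => by rw [hall i hi, mul_zero]
        rw [this] at hν1; norm_num at hν1
    have key : ∀ i ∈ L, ν i * Real.log (a i / ν i)
        ≤ M * ((i : ℝ) * ν i) + (s / φ) * b i - ν i - ν i * Real.log (s / φ) := by
      intro i hi
      rcases (hν0 i hi).lt_or_eq with hνi | hνi
      · -- ν i > 0
        set t : ℝ := s * b i / (φ * ν i) with htdef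
        have ht : 0 < t := div_pos (mul_pos hs0 (hbpos i hi)) (mul_pos hφ hνi)
        have hlogt : Real.log t ≤ t - 1 := Real.log_le_sub_one_of_pos ht
        have hνt : ν i * t = (s / φ) * b i := by
          rw [htdef]; field_simp
        have h2 : ν i * Real.log t ≤ (s / φ) * b i - ν i := by
          have := mul_le_mul_of_nonneg_left hlogt hνi.le
          rw [mul_sub, mul_one, hνt] at this
          linarith
        have h1 : Real.log t = Real.log (a i / ν i) - (i : ℝ) * M + Real.log (s / φ) := by
          rw [htdef, hbdef]
          rw [Real.log_div (mul_pos hs0 (mul_pos (ha i hi) (Real.exp_pos _))).ne'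
              (mul_pos hφ hνi).ne']
          rw [Real.log_mul hs0.ne' (mul_pos (ha i hi) (Real.exp_pos _)).ne',
              Real.log_mul (ha i hi).ne' (Real.exp_ne_zero _),
              Real.log_exp,
              Real.log_mul hφ.ne' hνi.ne',
              Real.log_div (ha i hi).ne' hνi.ne',
              Real.log_div hs0.ne' hφ.ne']
          ring
        have e1 : ν i * Real.log (a i / ν i)
            = ν i * Real.log t + M * ((i : ℝ) * ν i) - ν i * Real.log (s / φ) := by
          rw [h1]; ring
        rw [e1]; linarith
      · -- ν i = 0
        rw [← hνi]
        have h3 : 0 ≤ (s / φ) * b i :=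
          mul_nonneg (div_nonneg hs0.le hφ.le) (hbpos i hi).le
        simp only [zero_mul, mul_zero]
        linarith
    have hsum := Finset.sum_le_sum key
    have hrhs : ∑ i ∈ L, (M * ((i : ℝ) * ν i) + (s / φ) * b i - ν i - ν i * Real.log (s / φ))
        = M * (∑ i ∈ L, (i : ℝ) * ν i) + (s / φ) * (∑ i ∈ L, b i) - s - s * Real.log (s / φ) := by
      rw [Finset.sum_sub_distrib, Finset.sum_sub_distrib, Finset.sum_add_distrib,
        ← Finset.mul_sum, ← Finset.mul_sum, ← Finset.sum_mul, ← hsdef]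
    rw [hrhs, hν1, hbsum, mul_one] at hsum
    have hsφ : (s / φ) * φ = s := div_mul_cancel₀ s hφ.ne'
    simp only
    linarith
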